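/- Let n ≥ 2 be an integer, R > 0, and let φ : [R,∞) → ℝ be a solution of φ'(r) = (1+φ(r)²)(1 − (n−1)φ(r)/r). Then there exist constants C > 0 and r₀ ≥ R such that |φ(r) − r/(n−1) + 1/r| ≤ C/r² for all r ≥ r₀; that is, φ(r) = r/(n−1) − 1/r + O(r⁻²) as r → ∞. -/

import Mathlib

noncomputable section
open Set Filter Topology

/-- Persistence lemma: if `h a ≥ 0` and `h' > 0` whenever `h = 0`, then `h ≥ 0` on `[a,∞)`. -/
lemma persist_nonneg {a : ℝ} {h h' : ℝ → ℝ}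
    (hd : ∀ x ∈ Ici a, HasDerivWithinAt h (h' x) (Ici a) x)
    (h0 : 0 ≤ h a)
    (key : ∀ x ∈ Ici a, h x = 0 → 0 < h' x) :
    ∀ x ∈ Ici a, 0 ≤ h x := by
  intro b hb
  by_contra hneg
  push_neg at hneg
  have hcont : ContinuousOn h (Icc a b) := fun x hx =>
    ((hd x hx.1).continuousWithinAt).mono Icc_subset_Ici_self
  set S : Set ℝ := Icc a b ∩ h ⁻¹' (Ici 0) with hSdef
  have hSclosed : IsClosed S := hcont.preimage_isClosed_of_isClosed isClosed_Icc isClosed_Ici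
  have haS : a ∈ S := ⟨⟨le_refl a, hb⟩, h0⟩
  have hSbdd : BddAbove S := ⟨b, fun x hx => hx.1.2⟩
  obtain ⟨s, hsS, hsup⟩ : ∃ s ∈ S, ∀ x ∈ S, x ≤ s :=
    ⟨sSup S, hSclosed.csSup_mem ⟨a, haS⟩ hSbdd, fun x hx => le_csSup hSbdd hx⟩
  have hsa : a ≤ s := hsS.1.1
  have hsh : 0 ≤ h s := hsS.2
  have hsb : s < b := lt_of_le_of_ne hsS.1.2 (by rintro rfl; exact absurd hsh (not_le.2 hneg))
  have hafter : ∀ x ∈ Ioc s b, h x < 0 := by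
    intro x hx
    by_contra hge
    push_neg at hge
    have : x ∈ S := ⟨⟨le_trans hsa hx.1.le, hx.2⟩, hge⟩
    exact absurd (hsup x this) (not_le.2 hx.1)
  have hIoc : Ioc s b ∈ 𝓝[>] s := Ioc_mem_nhdsGT_of_mem ⟨le_refl s, hsb⟩
  have hle : 𝓝[>] s ≤ 𝓝[Ici a \ {s}] s :=
    nhdsWithin_mono s (fun x hx => ⟨le_trans hsa hx.le, ne_of_gt hx⟩)
  have hle2 : 𝓝[>] s ≤ 𝓝[Ici a] s := nhdsWithin_mono s (fun x hx => le_trans hsa hx.le)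
  rcases eq_or_lt_of_le hsh with heq | hpos
  · -- h s = 0, use positive derivative
    have hd' : 0 < h' s := key s hsa heq.symm
    have hslope : Tendsto (slope h s) (𝓝[Ici a \ {s}] s) (𝓝 (h' s)) :=
      hasDerivWithinAt_iff_tendsto_slope.1 (hd s hsa)
    have hev : ∀ᶠ x in 𝓝[>] s, 0 < slope h s x :=
      ((hslope.eventually (eventually_gt_nhds hd')).filter_mono hle)
    obtain ⟨x, hx1, hx2⟩ := (hev.and (eventually_of_mem hIoc (fun x hx => hx))).exists
    have hxs : 0 < x - s := sub_pos.2 hx2.1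
    have : 0 < h x - h s := by
      have := mul_pos hx1 hxs
      rw [slope_def_field] at this
      have hne : x - s ≠ 0 := ne_of_gt hxs
      calc (0:ℝ) < (h x - h s) / (x - s) * (x - s) := this
        _ = h x - h s := div_mul_cancel₀ _ hne
    rw [← heq] at this
    exact absurd (hafter x hx2) (not_lt.2 (by linarith))
  · -- h s > 0, use continuity
    have hct : ContinuousWithinAt h (Ici a) s := (hd s hsa).continuousWithinAt
    have hev : ∀ᶠ x in 𝓝[>] s, 0 < h x :=
      (hct.eventually (eventually_gt_nhds hpos)).filter_mono hle2
    obtain ⟨x, hx1, hx2⟩ := (hev.and (eventually_of_mem hIoc (fun x hx => hx))).exists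
    exact absurd (hafter x hx2) (not_lt.2 hx1.le)

/-- Monotonicity from a nonneg derivative on a right half-line. -/
lemma mono_tail {a : ℝ} {h h' : ℝ → ℝ}
    (hd : ∀ x ∈ Ici a, HasDerivWithinAt h (h' x) (Ici a) x)
    (pos : ∀ x ∈ Ici a, 0 ≤ h' x) : MonotoneOn h (Ici a) := by
  apply monotoneOn_of_hasDerivWithinAt_nonneg (f' := h') (convex_Ici a)
    (fun x hx => (hd x hx).continuousWithinAt)
  · intro x hx
    rw [interior_Ici] at hx
    exact ((hd x (mem_Ici.2 (mem_Ioi.1 hx).le)).mono (by rw [interior_Ici]; exact Ioi_subset_Ici_self))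
  · intro x hx
    rw [interior_Ici] at hx
    exact pos x (mem_Ici.2 (mem_Ioi.1 hx).le)

private lemma sq_lower {N K x p : ℝ} (hx0 : 0 < x)
    (h4 : x ^ 2 - N * K ≤ N * p * x) (h5 : 0 ≤ x ^ 2 - N * K) :
    x ^ 2 - 2 * N * K ≤ N ^ 2 * p ^ 2 := by
  have h6 := mul_self_le_mul_self h5 h4
  by_contra hcon
  push_neg at hcon
  nlinarith [h6, sq_nonneg (N * K), mul_pos hx0 hx0, hcon]

private lemma DleU {N x p : ℝ} (hN0 : 0 < N) (hx0 : 0 < x)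
    (f1 : N ^ 2 * (1 + p ^ 2) ≤ N ^ 2 + x ^ 2)
    (hq2 : 0 ≤ (x - N * p) * x ^ 2)
    (hB : (x - N * p) * x ^ 2 ≤ N * x - N * (N + 1))
    (hxN2 : N ^ 2 ≤ x) :
    (1 + p ^ 2) * (x - N * p) / x ≤ 1 / N + 1 / x ^ 2 - 1 / x := by
  have g1 : N ^ 2 * (1 + p ^ 2) * ((x - N * p) * x ^ 2) ≤
      (N ^ 2 + x ^ 2) * ((x - N * p) * x ^ 2) := mul_le_mul_of_nonneg_right f1 hq2
  have g2 : (N ^ 2 + x ^ 2) * ((x - N * p) * x ^ 2) ≤ (N ^ 2 + x ^ 2) * (N * x - N * (N + 1)) :=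
    mul_le_mul_of_nonneg_left hB (by positivity)
  have hterm : 0 ≤ x ^ 2 - N ^ 2 * x + N * x + N ^ 3 + N ^ 2 := by
    nlinarith [mul_nonneg (sub_nonneg.2 hxN2) hx0.le, mul_pos hN0 hx0,
      mul_pos (mul_pos hN0 hN0) hN0]
  have hbridge : N * ((N ^ 2 + x ^ 2) * (N * x - N * (N + 1))) ≤
      N ^ 2 * (x ^ 3 + N * x - N * x ^ 2) := by
    nlinarith [mul_nonneg (sq_nonneg N) hterm]
  have hchain : N ^ 2 * (N * x ^ 2 * ((1 + p ^ 2) * (x - N * p))) ≤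
      N ^ 2 * (x ^ 3 + N * x - N * x ^ 2) := by
    nlinarith [mul_le_mul_of_nonneg_left g1 hN0.le, mul_le_mul_of_nonneg_left g2 hN0.le, hbridge]
  have eL : N ^ 2 * (N * x ^ 3 * ((1 + p ^ 2) * (x - N * p) / x)) =
      N ^ 2 * (N * x ^ 2 * ((1 + p ^ 2) * (x - N * p))) := by
    field_simp
  have eR : N ^ 2 * (N * x ^ 3 * (1 / N + 1 / x ^ 2 - 1 / x)) =
      N ^ 2 * (x ^ 3 + N * x - N * x ^ 2) := by
    field_simp
  have h4 : N ^ 2 * (N * x ^ 3 * ((1 + p ^ 2) * (x - N * p) / x)) ≤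
      N ^ 2 * (N * x ^ 3 * (1 / N + 1 / x ^ 2 - 1 / x)) := by
    rw [eL, eR]; exact hchain
  have h5 := le_of_mul_le_mul_left h4 (by positivity : (0:ℝ) < N ^ 2)
  exact le_of_mul_le_mul_left h5 (by positivity : (0:ℝ) < N * x ^ 3)

private lemma DltU {N x p : ℝ} (hN0 : 0 < N) (hx0 : 0 < x)
    (f1 : N ^ 2 * (1 + p ^ 2) ≤ N ^ 2 + x ^ 2)
    (hq2 : 0 ≤ (x - N * p) * x ^ 2)
    (hB : (x - N * p) * x ^ 2 ≤ N * x - N * (N + 1))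
    (hxN2 : N ^ 2 ≤ x) (hxN2b : N + 2 ≤ x) :
    (1 + p ^ 2) * (x - N * p) / x < 1 / N + 1 / x ^ 2 - 2 * (N + 1) / x ^ 3 := by
  have g1 : N ^ 2 * (1 + p ^ 2) * ((x - N * p) * x ^ 2) ≤
      (N ^ 2 + x ^ 2) * ((x - N * p) * x ^ 2) := mul_le_mul_of_nonneg_right f1 hq2
  have g2 : (N ^ 2 + x ^ 2) * ((x - N * p) * x ^ 2) ≤ (N ^ 2 + x ^ 2) * (N * x - N * (N + 1)) :=
    mul_le_mul_of_nonneg_left hB (by positivity)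
  have hterm : 0 < x ^ 2 + N * x ^ 2 - N ^ 2 * x + N * x + N ^ 3 - N ^ 2 - 2 * N := by
    nlinarith [mul_nonneg (sub_nonneg.2 hxN2) hx0.le,
      mul_pos hN0 (mul_pos hx0 hx0),
      mul_nonneg hN0.le (sub_nonneg.2 hxN2b),
      mul_pos (mul_pos hN0 hN0) hN0]
  have hbridge : N * ((N ^ 2 + x ^ 2) * (N * x - N * (N + 1))) <
      N ^ 2 * (x ^ 3 + N * x - 2 * (N + 1) * N) := by
    nlinarith [mul_pos (mul_pos hN0 hN0) hterm]
  have hchain : N ^ 2 * (N * x ^ 2 * ((1 + p ^ 2) * (x - N * p))) <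
      N ^ 2 * (x ^ 3 + N * x - 2 * (N + 1) * N) := by
    nlinarith [mul_le_mul_of_nonneg_left g1 hN0.le, mul_le_mul_of_nonneg_left g2 hN0.le, hbridge]
  have eL : N ^ 2 * (N * x ^ 3 * ((1 + p ^ 2) * (x - N * p) / x)) =
      N ^ 2 * (N * x ^ 2 * ((1 + p ^ 2) * (x - N * p))) := by
    field_simp
  have eR : N ^ 2 * (N * x ^ 3 * (1 / N + 1 / x ^ 2 - 2 * (N + 1) / x ^ 3)) =
      N ^ 2 * (x ^ 3 + N * x - 2 * (N + 1) * N) := by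
    field_simp
  have h4 : N ^ 2 * (N * x ^ 3 * ((1 + p ^ 2) * (x - N * p) / x)) <
      N ^ 2 * (N * x ^ 3 * (1 / N + 1 / x ^ 2 - 2 * (N + 1) / x ^ 3)) := by
    rw [eL, eR]; exact hchain
  have h5 := lt_of_mul_lt_mul_left h4 (by positivity : (0:ℝ) ≤ N ^ 2)
  exact lt_of_mul_lt_mul_left h5 (by positivity : (0:ℝ) ≤ N * x ^ 3)

private lemma lowterm {N K x : ℝ} (hN0 : 0 < N) (hN1 : 1 ≤ N) (hK1 : 1 ≤ K) (hx0 : 0 < x)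
    (hxb : 2 * N * K + 4 * K + 5 ≤ x) :
    0 ≤ N * x ^ 2 + N ^ 2 * x + 2 * N ^ 3 - N * x - 2 * N * K * x - 4 * N ^ 2 * K - 4 * N ^ 2 := by
  have hK0 : 0 < K := lt_of_lt_of_le zero_lt_one hK1
  have hxN : N ≤ x := by nlinarith [mul_pos hN0 hK0]
  have u1 : 0 ≤ (x - (2 * N * K + 4 * K + 5)) * (N * x) :=
    mul_nonneg (by linarith) (by positivity)
  have v1 : 0 ≤ 2 * N * K * x * (N - 1) :=
    mul_nonneg (by positivity) (by linarith)
  have v2 : 0 ≤ 4 * N * K * (x - N) :=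
    mul_nonneg (by positivity) (by linarith)
  have v3 : 0 ≤ 5 * N * (x - N) := mul_nonneg (by positivity) (by linarith)
  nlinarith [u1, v1, v2, v3, mul_pos (mul_pos hN0 hN0) hx0,
    mul_pos (mul_pos hN0 hN0) hN0, mul_pos hN0 hx0]

private lemma DgeL {N K x p : ℝ} (hN0 : 0 < N) (hN1 : 1 ≤ N) (hK1 : 1 ≤ K) (hx0 : 0 < x)
    (F1 : x ^ 2 + N ^ 2 - 2 * N * K ≤ N ^ 2 * (1 + p ^ 2))
    (hG : 0 ≤ x ^ 2 + N ^ 2 - 2 * N * K)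
    (hB : N * x + 2 * N ^ 2 ≤ (x - N * p) * x ^ 2)
    (hxb : 2 * N * K + 4 * K + 5 ≤ x) :
    1 / N + 1 / x ^ 2 + 1 / x ≤ (1 + p ^ 2) * (x - N * p) / x := by
  have hq2 : 0 ≤ (x - N * p) * x ^ 2 := le_trans (by positivity) hB
  have g1 : (x ^ 2 + N ^ 2 - 2 * N * K) * ((x - N * p) * x ^ 2) ≤
      N ^ 2 * (1 + p ^ 2) * ((x - N * p) * x ^ 2) := mul_le_mul_of_nonneg_right F1 hq2
  have g2 : (x ^ 2 + N ^ 2 - 2 * N * K) * (N * x + 2 * N ^ 2) ≤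
      (x ^ 2 + N ^ 2 - 2 * N * K) * ((x - N * p) * x ^ 2) := mul_le_mul_of_nonneg_left hB hG
  have hterm := lowterm hN0 hN1 hK1 hx0 hxb
  have hbridge : N ^ 2 * (x ^ 3 + N * x + N * x ^ 2) ≤
      N * ((x ^ 2 + N ^ 2 - 2 * N * K) * (N * x + 2 * N ^ 2)) := by
    nlinarith [mul_nonneg hN0.le hterm, mul_pos (mul_pos (mul_pos hN0 hN0) hN0) hN0]
  have hchain : N ^ 2 * (x ^ 3 + N * x + N * x ^ 2) ≤
      N ^ 2 * (N * x ^ 2 * ((1 + p ^ 2) * (x - N * p))) := by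
    nlinarith [mul_le_mul_of_nonneg_left g1 hN0.le, mul_le_mul_of_nonneg_left g2 hN0.le, hbridge]
  have eL : N ^ 2 * (N * x ^ 3 * ((1 + p ^ 2) * (x - N * p) / x)) =
      N ^ 2 * (N * x ^ 2 * ((1 + p ^ 2) * (x - N * p))) := by
    field_simp
  have eR : N ^ 2 * (N * x ^ 3 * (1 / N + 1 / x ^ 2 + 1 / x)) =
      N ^ 2 * (x ^ 3 + N * x + N * x ^ 2) := by
    field_simp
  have h4 : N ^ 2 * (N * x ^ 3 * (1 / N + 1 / x ^ 2 + 1 / x)) ≤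
      N ^ 2 * (N * x ^ 3 * ((1 + p ^ 2) * (x - N * p) / x)) := by
    rw [eL, eR]; exact hchain
  have h5 := le_of_mul_le_mul_left h4 (by positivity : (0:ℝ) < N ^ 2)
  exact le_of_mul_le_mul_left h5 (by positivity : (0:ℝ) < N * x ^ 3)

private lemma DgtL {N K x p : ℝ} (hN0 : 0 < N) (hN1 : 1 ≤ N) (hK1 : 1 ≤ K) (hx0 : 0 < x)
    (F1 : x ^ 2 + N ^ 2 - 2 * N * K ≤ N ^ 2 * (1 + p ^ 2))
    (hG : 0 ≤ x ^ 2 + N ^ 2 - 2 * N * K)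
    (hB : N * x + 2 * N ^ 2 ≤ (x - N * p) * x ^ 2)
    (hxb : 2 * N * K + 4 * K + 5 ≤ x) :
    1 / N + 1 / x ^ 2 + 4 * N / x ^ 3 < (1 + p ^ 2) * (x - N * p) / x := by
  have hq2 : 0 ≤ (x - N * p) * x ^ 2 := le_trans (by positivity) hB
  have g1 : (x ^ 2 + N ^ 2 - 2 * N * K) * ((x - N * p) * x ^ 2) ≤
      N ^ 2 * (1 + p ^ 2) * ((x - N * p) * x ^ 2) := mul_le_mul_of_nonneg_right F1 hq2
  have g2 : (x ^ 2 + N ^ 2 - 2 * N * K) * (N * x + 2 * N ^ 2) ≤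
      (x ^ 2 + N ^ 2 - 2 * N * K) * ((x - N * p) * x ^ 2) := mul_le_mul_of_nonneg_left hB hG
  have hterm := lowterm hN0 hN1 hK1 hx0 hxb
  have hxN : N ≤ x := by
    have hK0 : 0 < K := lt_of_lt_of_le zero_lt_one hK1
    nlinarith [mul_pos hN0 hK0]
  have hbridge : N ^ 2 * (x ^ 3 + N * x + 4 * N ^ 2) <
      N * ((x ^ 2 + N ^ 2 - 2 * N * K) * (N * x + 2 * N ^ 2)) := by
    nlinarith [mul_nonneg hN0.le hterm, mul_pos (mul_pos (mul_pos hN0 hN0) hN0) hN0,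
      mul_pos (mul_pos hN0 hN0) (mul_pos hN0 hx0),
      mul_nonneg (mul_nonneg (mul_nonneg hN0.le hN0.le) hN0.le) (sub_nonneg.2 hxN),
      mul_pos hN0 (mul_pos hx0 hx0)]
  have hchain : N ^ 2 * (x ^ 3 + N * x + 4 * N ^ 2) <
      N ^ 2 * (N * x ^ 2 * ((1 + p ^ 2) * (x - N * p))) := by
    nlinarith [mul_le_mul_of_nonneg_left g1 hN0.le, mul_le_mul_of_nonneg_left g2 hN0.le, hbridge]
  have eL : N ^ 2 * (N * x ^ 3 * ((1 + p ^ 2) * (x - N * p) / x)) =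
      N ^ 2 * (N * x ^ 2 * ((1 + p ^ 2) * (x - N * p))) := by
    field_simp
  have eR : N ^ 2 * (N * x ^ 3 * (1 / N + 1 / x ^ 2 + 4 * N / x ^ 3)) =
      N ^ 2 * (x ^ 3 + N * x + 4 * N ^ 2) := by
    field_simp
  have h4 : N ^ 2 * (N * x ^ 3 * (1 / N + 1 / x ^ 2 + 4 * N / x ^ 3)) <
      N ^ 2 * (N * x ^ 3 * ((1 + p ^ 2) * (x - N * p) / x)) := by
    rw [eL, eR]; exact hchain
  have h5 := lt_of_mul_lt_mul_left h4 (by positivity : (0:ℝ) ≤ N ^ 2)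
  exact lt_of_mul_lt_mul_left h5 (by positivity : (0:ℝ) ≤ N * x ^ 3)

set_option maxHeartbeats 4000000 in
theorem translator_ode_asymptotics {n : ℕ} (hn : 2 ≤ n) (R : ℝ) (hR : 0 < R)
    (φ : ℝ → ℝ)
    (hφ : ∀ r ∈ Ici R,
      HasDerivWithinAt φ ((1 + φ r ^ 2) * (1 - ((n : ℝ) - 1) * φ r / r)) (Ici R) r) :
    ∃ C > (0 : ℝ), ∃ r₀ ≥ R, ∀ r ≥ r₀,
      |φ r - r / ((n : ℝ) - 1) + 1 / r| ≤ C / r ^ 2 := by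
  have hn2 : (2:ℝ) ≤ (n:ℝ) := by exact_mod_cast hn
  set N : ℝ := (n:ℝ) - 1 with hNdef
  have hN1 : 1 ≤ N := by simp only [hNdef]; linarith
  have hN0 : 0 < N := lt_of_lt_of_le zero_lt_one hN1
  have hNn : N ≤ (n:ℝ) := by simp only [hNdef]; linarith
  clear_value N
  set D : ℝ → ℝ := fun r => (1 + φ r ^ 2) * (1 - N * φ r / r) with hDdef
  have hdphi : ∀ a, R ≤ a → ∀ x ∈ Ici a, HasDerivWithinAt φ (D x) (Ici a) x :=
    fun a ha x hx => (hφ x (le_trans ha hx)).mono (Ici_subset_Ici.2 ha)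
  have hDform : ∀ x : ℝ, 0 < x → D x = (1 + φ x ^ 2) * (x - N * φ x) / x := by
    intro x hx
    simp only [hDdef]
    field_simp
  have hpos : ∀ a, R ≤ a → ∀ x ∈ Ici a, 0 < x :=
    fun a ha x hx => lt_of_lt_of_le hR (le_trans ha hx)
  clear_value D
  have hderiv_inv : ∀ x : ℝ, 0 < x → HasDerivAt (fun y : ℝ => y⁻¹) (-1 / x ^ 2) x := by
    intro x hx
    exact (hasDerivAt_inv hx.ne').congr_deriv (by rw [neg_div, one_div])
  have hderiv_invsq : ∀ x : ℝ, 0 < x → HasDerivAt (fun y : ℝ => (y ^ 2)⁻¹) (-2 / x ^ 3) x := by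
    intro x hx
    have h := (hasDerivAt_pow 2 x).inv (pow_ne_zero 2 hx.ne')
    refine h.congr_deriv ?_
    rw [div_eq_div_iff (by positivity) (by positivity)]
    have e : (2:ℕ) - 1 = 1 := rfl
    simp only [e, pow_one, Nat.cast_ofNat]
    ring
  have hdw : ∀ a, R ≤ a → ∀ x ∈ Ici a,
      HasDerivWithinAt (fun r => φ r - r / N + r⁻¹) (D x - 1 / N + -1 / x ^ 2) (Ici a) x := by
    intro a ha x hx
    have hx0 : 0 < x := hpos a ha x hx
    have d := ((hdphi a ha x hx).sub ((hasDerivWithinAt_id x (Ici a)).div_const N)).add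
      ((hderiv_inv x hx0).hasDerivWithinAt)
    exact d
  -- Stage A : eventually φ r ≤ r / N
  obtain ⟨a1, ha1R, hA⟩ : ∃ a1, R ≤ a1 ∧ ∀ r ∈ Ici a1, 0 ≤ r / N - φ r := by
    have hreach : ∃ a, R ≤ a ∧ 0 ≤ a / N - φ a := by
      by_contra hc
      push_neg at hc
      have hmono : MonotoneOn (fun r => -φ r) (Ici R) := by
        apply mono_tail (h' := fun x => -(D x)) (fun x hx => (hdphi R le_rfl x hx).neg)
        intro x hx
        have hx0 : 0 < x := hpos R le_rfl x hx
        have h1 : x / N < φ x := by have := hc x hx; linarith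
        have h2 : x < N * φ x := by
          rw [div_lt_iff₀ hN0] at h1; linarith [mul_comm (φ x) N]
        rw [hDform x hx0, neg_nonneg]
        apply div_nonpos_of_nonpos_of_nonneg _ hx0.le
        nlinarith [sq_nonneg (φ x)]
      set x := max R (N * φ R + R) with hxdef
      have hxR : R ≤ x := le_max_left _ _
      have hx2 : N * φ R + R ≤ x := le_max_right _ _
      have hmx := hmono (mem_Ici.2 (le_refl R)) (mem_Ici.2 hxR) hxR
      simp only [neg_le_neg_iff] at hmx
      have h1 : x / N < φ x := by have := hc x hxR; linarith
      rw [div_lt_iff₀ hN0] at h1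
      nlinarith
    obtain ⟨a, haR, ha⟩ := hreach
    refine ⟨a, haR, ?_⟩
    apply persist_nonneg (h := fun r => r / N - φ r) (h' := fun x => 1 / N - D x)
      (fun x hx => by
        exact ((hasDerivWithinAt_id x (Ici a)).div_const N).sub (hdphi a haR x hx)) ha
    intro x hx hzero
    have hx0 : 0 < x := hpos a haR x hx
    have hp : φ x = x / N := by linarith
    have : D x = 0 := by
      rw [hDform x hx0, hp]
      have : x - N * (x / N) = 0 := by field_simp; ring
      rw [this, mul_zero, zero_div]
    rw [this]
    norm_num
    positivity
  -- Stage B : eventually φ r ≥ ε r  with ε = 1/(2n)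
  set ε : ℝ := 1 / (2 * (n:ℝ)) with hεdef
  have hεpos : 0 < ε := by
    simp only [hεdef]; positivity
  have hε4 : ε ≤ 1 / 4 := by
    rw [hεdef, div_le_div_iff₀ (by positivity) (by norm_num)]
    linarith
  have hNε : N * ε ≤ 1 / 2 := by
    rw [hεdef, hNdef]
    rw [mul_one_div, div_le_div_iff₀ (by positivity) (by norm_num)]
    linarith
  clear_value ε
  obtain ⟨a2, ha2R, hB⟩ : ∃ a2, R ≤ a2 ∧ ∀ r ∈ Ici a2, 0 ≤ φ r - ε * r := by
    have hreach : ∃ a, R ≤ a ∧ 0 ≤ φ a - ε * a := by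
      by_contra hc
      push_neg at hc
      have hmono : MonotoneOn (fun r => φ r - r / 2) (Ici R) := by
        apply mono_tail (h' := fun x => D x - 1 / 2)
          (fun x hx => by
            exact (hdphi R le_rfl x hx).sub ((hasDerivWithinAt_id x (Ici R)).div_const 2))
        intro x hx
        have hx0 : 0 < x := hpos R le_rfl x hx
        have h1 : φ x < ε * x := by have := hc x hx; linarith
        have h2 : N * φ x ≤ x / 2 := by nlinarith
        rw [hDform x hx0, sub_nonneg, le_div_iff₀ hx0]
        nlinarith [sq_nonneg (φ x)]
      set x := max R (2 * R - 4 * φ R + 1) with hxdef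
      have hxR : R ≤ x := le_max_left _ _
      have hx2 : 2 * R - 4 * φ R + 1 ≤ x := le_max_right _ _
      have hx0 : 0 < x := lt_of_lt_of_le hR hxR
      have hmx := hmono (mem_Ici.2 (le_refl R)) (mem_Ici.2 hxR) hxR
      try simp only at hmx
      have h1 : φ x < ε * x := by have := hc x hxR; linarith
      have h3 : ε * x ≤ x / 4 := by nlinarith
      linarith
    obtain ⟨a, haR, ha⟩ := hreach
    refine ⟨a, haR, ?_⟩
    apply persist_nonneg (h := fun r => φ r - ε * r) (h' := fun x => D x - ε)
      (fun x hx => by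
        exact ((hdphi a haR x hx).sub ((hasDerivWithinAt_id x (Ici a)).const_mul ε)).congr_deriv (by ring)) ha
    intro x hx hzero
    have hx0 : 0 < x := hpos a haR x hx
    have hp : φ x = ε * x := by linarith
    rw [hDform x hx0, hp, sub_pos, lt_div_iff₀ hx0]
    have h2 : N * (ε * x) ≤ x / 2 := by nlinarith
    have h3 : ε * x ≤ x / 4 := by nlinarith
    have h4 : 0 ≤ x - N * (ε * x) := by linarith
    nlinarith [mul_nonneg (sq_nonneg (ε * x)) h4]
  -- Stage C : eventually r/N - φ r ≤ K / r,  K = 8 n³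
  set K : ℝ := 8 * (n:ℝ)^3 with hKdef
  have hK64 : 64 ≤ K := by
    rw [hKdef]
    have h8 : (2:ℝ)^3 ≤ (n:ℝ)^3 := pow_le_pow_left₀ (by norm_num) hn2 3
    nlinarith
  have hK0 : 0 < K := lt_of_lt_of_le (by norm_num) hK64
  have hεNK : ε^2 * (N * K) = 2 * (n:ℝ) * N := by
    have hne : (n:ℝ) ≠ 0 := by linarith
    rw [hεdef, hKdef]
    field_simp
    ring
  have h2nN : 4 ≤ 2 * (n:ℝ) * N := by nlinarith
  have hNK : N ≤ K := by
    rw [hKdef, hNdef]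
    have h4 : 4 ≤ (n:ℝ)^2 := by nlinarith
    have h8 : (n:ℝ) ≤ (n:ℝ)^3 := by nlinarith [mul_le_mul_of_nonneg_left h4 (show (0:ℝ) ≤ (n:ℝ) by linarith)]
    linarith
  clear_value K
  have ha1b : a1 ≤ max a1 a2 := le_max_left _ _
  have ha2b : a2 ≤ max a1 a2 := le_max_right _ _
  set a3 := max (max a1 a2) K with ha3def
  have ha3R : R ≤ a3 := le_trans ha1R (le_trans ha1b (le_max_left _ _))
  have ha1a3 : a1 ≤ a3 := le_trans ha1b (le_max_left _ _)
  have ha2a3 : a2 ≤ a3 := le_trans ha2b (le_max_left _ _)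
  have hKa3 : K ≤ a3 := le_max_right _ _
  clear_value a3
  have hu : ∀ x, a3 ≤ x → φ x ≤ x / N := fun x hx => by
    have := hA x (le_trans ha1a3 hx); linarith
  have hl : ∀ x, a3 ≤ x → ε * x ≤ φ x := fun x hx => by
    have := hB x (le_trans ha2a3 hx); linarith
  have hsqεφ : ∀ x, a3 ≤ x → (ε * x)^2 ≤ φ x ^ 2 := by
    intro x hx
    have hx0 : 0 < x := hpos a3 ha3R x hx
    have h1 := hl x hx
    have h2 : 0 ≤ ε * x := by positivity
    nlinarith
  obtain ⟨a4, ha4a3, hC⟩ : ∃ a4, a3 ≤ a4 ∧ ∀ r ∈ Ici a4, 0 ≤ K / r - (r / N - φ r) := by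
    have hreach : ∃ a, a3 ≤ a ∧ 0 ≤ K / a - (a / N - φ a) := by
      by_contra hc
      push_neg at hc
      have hmono : MonotoneOn (fun r => φ r - 2 * r) (Ici a3) := by
        apply mono_tail (h' := fun x => D x - 2)
          (fun x hx => by
            exact ((hdphi a3 ha3R x hx).sub ((hasDerivWithinAt_id x (Ici a3)).const_mul 2)).congr_deriv (by ring))
        intro x hx
        have hx0 : 0 < x := hpos a3 ha3R x hx
        have hεx : ε * x ≤ φ x := hl x hx
        have hsq := hsqεφ x hx
        have h1 : K / x < x / N - φ x := by have := hc x hx; linarith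
        rw [div_lt_iff₀ hx0] at h1
        have e : N * (x / N - φ x) = x - N * φ x := by field_simp
        have h2 := mul_lt_mul_of_pos_left h1 hN0
        rw [show N * ((x / N - φ x) * x) = N * (x / N - φ x) * x by ring, e] at h2
        have hq : N * K < x * (x - N * φ x) := by nlinarith
        have hqpos : 0 < x - N * φ x := by nlinarith [mul_pos hN0 hK0]
        rw [hDform x hx0, sub_nonneg, le_div_iff₀ hx0]
        have e1 : (ε*x)^2 * (x - N * φ x) ≤ (1 + φ x^2) * (x - N * φ x) :=
          mul_le_mul_of_nonneg_right (by nlinarith) hqpos.le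
        have e2 : ε^2 * x * (N * K) ≤ ε^2 * x * (x * (x - N * φ x)) :=
          mul_le_mul_of_nonneg_left hq.le (by positivity)
        have e3 : ε^2 * x * (N * K) = 2 * (n:ℝ) * N * x := by
          linear_combination x * hεNK
        have e4 : 4 * x ≤ 2 * (n:ℝ) * N * x := by nlinarith
        nlinarith [e1, e2, e3, e4]
      set x := max a3 (2 * a3 - φ a3 + 1) with hxdef
      have hxa3 : a3 ≤ x := le_max_left _ _
      have hx2 : 2 * a3 - φ a3 + 1 ≤ x := le_max_right _ _
      have hx0 : 0 < x := lt_of_lt_of_le (lt_of_lt_of_le hR ha3R) hxa3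
      have hmx := hmono (mem_Ici.2 (le_refl a3)) (mem_Ici.2 hxa3) hxa3
      try simp only at hmx
      have hupx : φ x ≤ x / N := hu x hxa3
      have hxN : x / N ≤ x := by
        rw [div_le_iff₀ hN0]; nlinarith
      linarith
    obtain ⟨a, haa3, ha⟩ := hreach
    refine ⟨a, haa3, ?_⟩
    have haR : R ≤ a := le_trans ha3R haa3
    apply persist_nonneg (h := fun r => K / r - (r / N - φ r))
      (h' := fun x => K * -(x^2)⁻¹ - (1 / N - D x))
      (fun x hx => by
        have hx0 : 0 < x := hpos a haR x hx
        have d1 := (((hasDerivAt_inv hx0.ne').hasDerivWithinAt (s := Ici a)).const_mul K)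
        have d2 := ((hasDerivWithinAt_id x (Ici a)).div_const N).sub (hdphi a haR x hx)
        exact d1.sub d2) ha
    intro x hx hzero
    have hx0 : 0 < x := hpos a haR x hx
    have hxa3 : a3 ≤ x := le_trans haa3 hx
    have hx2K : K ≤ x^2 := by nlinarith [le_trans hKa3 hxa3]
    have hφx : φ x = x / N - K / x := by
      try simp only at hzero
      linarith
    have hq : x - N * φ x = N * K / x := by
      rw [hφx]; field_simp; ring
    have hDx : D x = (1 + φ x^2) * (N * K) / x^2 := by
      rw [hDform x hx0, hq]; field_simp
    have hsq := hsqεφ x hxa3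
    have hεNKx2 : ε^2 * x^2 * (N * K) = 2 * (n:ℝ) * N * x^2 := by
      linear_combination x^2 * hεNK
    have h4x : 4 * x^2 ≤ (1 + φ x^2) * (N * K) := by
      nlinarith [mul_le_mul_of_nonneg_right hsq (mul_pos hN0 hK0).le, sq_nonneg x]
    have hD4 : 4 ≤ D x := by
      rw [hDx, le_div_iff₀ (by positivity)]; linarith
    have hKx2 : K / x^2 ≤ 1 := by
      rw [div_le_one (by positivity)]; exact hx2K
    have h1N : 1 / N ≤ 1 := by
      rw [div_le_one hN0]; exact hN1
    have hKinv : K * -(x^2)⁻¹ = -(K / x^2) := by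
      rw [div_eq_mul_inv]; ring
    simp only [hKinv]
    linarith
  -- region facts
  have hq0 : ∀ x, a1 ≤ x → 0 ≤ x - N * φ x := by
    intro x hx
    have h := hA x hx
    have h2 : 0 ≤ N * (x / N - φ x) := mul_nonneg hN0.le h
    have e : N * (x / N - φ x) = x - N * φ x := by field_simp
    rw [e] at h2
    exact h2
  have hφ0 : ∀ x, a3 ≤ x → 0 ≤ φ x := by
    intro x hx
    have h := hl x hx
    have hx0 : 0 < x := hpos a3 ha3R x hx
    linarith [mul_pos hεpos hx0]
  have hsqup : ∀ x, a3 ≤ x → N ^ 2 * (1 + φ x ^ 2) ≤ N ^ 2 + x ^ 2 := by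
    intro x hx
    have hx0 : 0 < x := hpos a3 ha3R x hx
    have h := hu x hx
    have h2 : N * φ x ≤ N * (x / N) := mul_le_mul_of_nonneg_left h hN0.le
    have e : N * (x / N) = x := by field_simp
    rw [e] at h2
    have h0 := hφ0 x hx
    have hNp0 : 0 ≤ N * φ x := mul_nonneg hN0.le h0
    linarith [mul_nonneg (sub_nonneg.2 h2) (add_nonneg hNp0 (le_trans hNp0 h2)), sq_nonneg x]
  have ha4R : R ≤ a4 := le_trans ha3R ha4a3
  -- Stage D upper barrier
  set a5 := max a4 (3 * (n:ℝ) ^ 2) with ha5def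
  have ha4a5 : a4 ≤ a5 := le_max_left _ _
  have h3na5 : 3 * (n:ℝ) ^ 2 ≤ a5 := le_max_right _ _
  have ha5R : R ≤ a5 := le_trans ha4R ha4a5
  clear_value a5
  have ha3a5 : a3 ≤ a5 := le_trans ha4a3 ha4a5
  have ha1a5 : a1 ≤ a5 := le_trans ha1a3 ha3a5
  have hnN : (n:ℝ) = N + 1 := by rw [hNdef]; ring
  have hxfacts : ∀ x, a5 ≤ x → N ^ 2 ≤ x ∧ N + 2 ≤ x := by
    intro x hx
    have h3n : 3 * (n:ℝ) ^ 2 ≤ x := le_trans h3na5 hx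
    have hsq : N ^ 2 ≤ (n:ℝ) ^ 2 := pow_le_pow_left₀ hN0.le hNn 2
    constructor
    · linarith [sq_nonneg ((n:ℝ))]
    · have h1 : (n:ℝ) + 2 ≤ 3 * (n:ℝ) ^ 2 := by nlinarith [sq_nonneg ((n:ℝ) - 2), hn2]
      linarith
  -- reach, upper
  obtain ⟨a6, ha6a5, hU⟩ : ∃ a6, a5 ≤ a6 ∧
      ∀ r ∈ Ici a6, 0 ≤ (n:ℝ) * (r ^ 2)⁻¹ - (φ r - r / N + r⁻¹) := by
    have hreach : ∃ a, a5 ≤ a ∧ 0 ≤ (n:ℝ) * (a ^ 2)⁻¹ - (φ a - a / N + a⁻¹) := by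
      by_contra hc
      push_neg at hc
      have hmono : MonotoneOn (fun r => -(φ r - r / N + r⁻¹ + Real.log r)) (Ici a5) := by
        apply mono_tail (h' := fun x => -(D x - 1 / N + -1 / x ^ 2 + x⁻¹))
          (fun x hx => by
            have hx0 : 0 < x := hpos a5 ha5R x hx
            exact ((hdw a5 ha5R x hx).add ((Real.hasDerivAt_log hx0.ne').hasDerivWithinAt)).neg)
        intro x hx
        have hx0 : 0 < x := hpos a5 ha5R x hx
        obtain ⟨hxN2, hxN2b⟩ := hxfacts x hx
        have h1 : x / N - x⁻¹ + (n:ℝ) * (x ^ 2)⁻¹ < φ x := by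
          have := hc x hx; linarith
        have e3 : (x - N * (x / N - x⁻¹ + (n:ℝ) * (x ^ 2)⁻¹)) * x ^ 2 = N * x - N * (N + 1) := by
          rw [hnN]; field_simp; ring
        have hB : (x - N * φ x) * x ^ 2 ≤ N * x - N * (N + 1) := by
          rw [← e3]
          exact mul_le_mul_of_nonneg_right
            (by linarith [mul_lt_mul_of_pos_left h1 hN0]) (sq_nonneg x)
        have hq2 : 0 ≤ (x - N * φ x) * x ^ 2 :=
          mul_nonneg (hq0 x (le_trans ha1a5 hx)) (sq_nonneg x)
        have f1 := hsqup x (le_trans ha3a5 hx)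
        have hDle : D x ≤ 1 / N + 1 / x ^ 2 - 1 / x := by
          rw [hDform x hx0]
          exact DleU hN0 hx0 f1 hq2 hB hxN2
        show 0 ≤ -(D x - 1 / N + -1 / x ^ 2 + x⁻¹)
        have e7 : (1:ℝ) / x = x⁻¹ := one_div x
        rw [e7] at hDle
        linarith [(by ring : (-1:ℝ)/x^2 = -(1/x^2))]
      set x := a5 * Real.exp (|φ a5 - a5 / N + a5⁻¹| + 1) with hxdef
      have ha50 : 0 < a5 := lt_of_lt_of_le hR ha5R
      have hexp1 : 1 ≤ Real.exp (|φ a5 - a5 / N + a5⁻¹| + 1) := by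
        rw [← Real.exp_zero]
        exact Real.exp_le_exp.2 (by positivity)
      have hxa5 : a5 ≤ x := by
        rw [hxdef]
        have := mul_le_mul_of_nonneg_left hexp1 ha50.le
        linarith
      have hx0 : 0 < x := lt_of_lt_of_le ha50 hxa5
      have hlog : Real.log x = Real.log a5 + (|φ a5 - a5 / N + a5⁻¹| + 1) := by
        rw [hxdef, Real.log_mul ha50.ne' (Real.exp_ne_zero _), Real.log_exp]
      have hmx : -(φ a5 - a5 / N + a5⁻¹ + Real.log a5) ≤ -(φ x - x / N + x⁻¹ + Real.log x) :=
        hmono (mem_Ici.2 (le_refl a5)) (mem_Ici.2 hxa5) hxa5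
      rw [hlog] at hmx
      have hcx := hc x hxa5
      have habs : φ a5 - a5 / N + a5⁻¹ ≤ |φ a5 - a5 / N + a5⁻¹| := le_abs_self _
      have hnpos : 0 < (n:ℝ) * (x ^ 2)⁻¹ := by positivity
      linarith
    obtain ⟨a, haa5, ha⟩ := hreach
    refine ⟨a, haa5, ?_⟩
    have haR : R ≤ a := le_trans ha5R haa5
    apply persist_nonneg (h := fun r => (n:ℝ) * (r ^ 2)⁻¹ - (φ r - r / N + r⁻¹))
      (h' := fun x => (n:ℝ) * (-2 / x ^ 3) - (D x - 1 / N + -1 / x ^ 2))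
      (fun x hx => by
        have hx0 : 0 < x := hpos a haR x hx
        exact (((hderiv_invsq x hx0).hasDerivWithinAt).const_mul (n:ℝ)).sub (hdw a haR x hx)) ha
    intro x hx hzero
    have hx0 : 0 < x := hpos a haR x hx
    have hxa5 : a5 ≤ x := le_trans haa5 hx
    obtain ⟨hxN2, hxN2b⟩ := hxfacts x hxa5
    try simp only at hzero
    have hφx : φ x = x / N - x⁻¹ + (n:ℝ) * (x ^ 2)⁻¹ := by linarith
    have hq3 : (x - N * φ x) * x ^ 2 = N * x - N * (N + 1) := by
      rw [hφx, hnN]; field_simp; ring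
    have hq2 : 0 ≤ (x - N * φ x) * x ^ 2 := by
      rw [hq3]
      linarith [mul_nonneg hN0.le (sub_nonneg.2 (show N + 1 ≤ x by linarith))]
    have f1 := hsqup x (le_trans ha3a5 hxa5)
    have hDlt : D x < 1 / N + 1 / x ^ 2 - 2 * (N + 1) / x ^ 3 := by
      rw [hDform x hx0]
      exact DltU hN0 hx0 f1 hq2 (le_of_eq hq3) hxN2 hxN2b
    show 0 < (n:ℝ) * (-2 / x ^ 3) - (D x - 1 / N + -1 / x ^ 2)
    have e9 : (n:ℝ) * (-2 / x ^ 3) = -(2 * (N + 1) / x ^ 3) := by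
      rw [hnN]; ring
    rw [e9]
    linarith [(by ring : (-1:ℝ)/x^2 = -(1/x^2))]
  -- Stage D lower barrier
  set a7 := max a6 (2 * N * K + 4 * K + 5) with ha7def
  have ha6a7 : a6 ≤ a7 := le_max_left _ _
  have hba7 : 2 * N * K + 4 * K + 5 ≤ a7 := le_max_right _ _
  have ha7R : R ≤ a7 := le_trans (le_trans ha5R ha6a5) ha6a7
  have ha4a7 : a4 ≤ a7 := le_trans (le_trans ha4a5 ha6a5) ha6a7
  clear_value a7
  have hK1 : (1:ℝ) ≤ K := by linarith
  have hlowfacts : ∀ x, a7 ≤ x →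
      (x ^ 2 + N ^ 2 - 2 * N * K ≤ N ^ 2 * (1 + φ x ^ 2)) ∧
      (0 ≤ x ^ 2 + N ^ 2 - 2 * N * K) := by
    intro x hx
    have hx0 : 0 < x := hpos a7 ha7R x hx
    have hNK0 : 0 < N * K := mul_pos hN0 hK0
    have hxb : 2 * N * K + 4 * K + 5 ≤ x := le_trans hba7 hx
    have hx1 : 1 ≤ x := by linarith [hNK0, hK0]
    have hxNK : 2 * N * K ≤ x := by linarith [hK0]
    have hx2x : x ≤ x ^ 2 := by
      linarith [mul_nonneg hx0.le (sub_nonneg.2 hx1), sq_nonneg x, sq_abs x,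
        (by ring : x * (x - 1) = x ^ 2 - x)]
    have h := hC x (le_trans ha4a7 hx)
    have h1 : x / N - φ x ≤ K / x := by linarith
    have h2 : N * (x / N - φ x) ≤ N * (K / x) := mul_le_mul_of_nonneg_left h1 hN0.le
    have e : N * (x / N - φ x) = x - N * φ x := by field_simp
    rw [e] at h2
    have h3 : (x - N * φ x) * x ≤ N * (K / x) * x := mul_le_mul_of_nonneg_right h2 hx0.le
    have e2 : N * (K / x) * x = N * K := by field_simp
    rw [e2] at h3
    have h4 : x ^ 2 - N * K ≤ N * φ x * x := by
      linarith [(by ring : (x - N * φ x) * x = x ^ 2 - N * φ x * x)]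
    have h5 : 0 ≤ x ^ 2 - N * K := by linarith
    have hsqL := sq_lower hx0 h4 h5
    exact ⟨by linarith [hsqL], by linarith [sq_nonneg N]⟩
  obtain ⟨a8, ha8a7, hL⟩ : ∃ a8, a7 ≤ a8 ∧
      ∀ r ∈ Ici a8, 0 ≤ φ r - r / N + r⁻¹ + 2 * N * (r ^ 2)⁻¹ := by
    have hreach : ∃ a, a7 ≤ a ∧ 0 ≤ φ a - a / N + a⁻¹ + 2 * N * (a ^ 2)⁻¹ := by
      by_contra hc
      push_neg at hc
      have hmono : MonotoneOn (fun r => φ r - r / N + r⁻¹ - Real.log r) (Ici a7) := by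
        apply mono_tail (h' := fun x => D x - 1 / N + -1 / x ^ 2 - x⁻¹)
          (fun x hx => by
            have hx0 : 0 < x := hpos a7 ha7R x hx
            exact (hdw a7 ha7R x hx).sub ((Real.hasDerivAt_log hx0.ne').hasDerivWithinAt))
        intro x hx
        have hx0 : 0 < x := hpos a7 ha7R x hx
        obtain ⟨F1, hG⟩ := hlowfacts x hx
        have h1 : φ x < x / N - x⁻¹ - 2 * N * (x ^ 2)⁻¹ := by
          have := hc x hx; linarith
        have e3 : (x - N * (x / N - x⁻¹ - 2 * N * (x ^ 2)⁻¹)) * x ^ 2 = N * x + 2 * N ^ 2 := by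
          field_simp; ring
        have hB : N * x + 2 * N ^ 2 ≤ (x - N * φ x) * x ^ 2 := by
          rw [← e3]
          exact mul_le_mul_of_nonneg_right
            (by linarith [mul_lt_mul_of_pos_left h1 hN0]) (sq_nonneg x)
        have hDge : 1 / N + 1 / x ^ 2 + 1 / x ≤ D x := by
          rw [hDform x hx0]
          exact DgeL hN0 hN1 hK1 hx0 F1 hG hB (le_trans hba7 hx)
        show 0 ≤ D x - 1 / N + -1 / x ^ 2 - x⁻¹
        have e7 : (1:ℝ) / x = x⁻¹ := one_div x
        rw [e7] at hDge
        linarith [(by ring : (-1:ℝ)/x^2 = -(1/x^2))]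
      set x := a7 * Real.exp (|φ a7 - a7 / N + a7⁻¹| + 1) with hxdef
      have ha70 : 0 < a7 := lt_of_lt_of_le hR ha7R
      have hexp1 : 1 ≤ Real.exp (|φ a7 - a7 / N + a7⁻¹| + 1) := by
        rw [← Real.exp_zero]
        exact Real.exp_le_exp.2 (by positivity)
      have hxa7 : a7 ≤ x := by
        rw [hxdef]
        have := mul_le_mul_of_nonneg_left hexp1 ha70.le
        linarith
      have hx0 : 0 < x := lt_of_lt_of_le ha70 hxa7
      have hlog : Real.log x = Real.log a7 + (|φ a7 - a7 / N + a7⁻¹| + 1) := by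
        rw [hxdef, Real.log_mul ha70.ne' (Real.exp_ne_zero _), Real.log_exp]
      have hmx : φ a7 - a7 / N + a7⁻¹ - Real.log a7 ≤ φ x - x / N + x⁻¹ - Real.log x :=
        hmono (mem_Ici.2 (le_refl a7)) (mem_Ici.2 hxa7) hxa7
      rw [hlog] at hmx
      have hcx := hc x hxa7
      have habs : -|φ a7 - a7 / N + a7⁻¹| ≤ φ a7 - a7 / N + a7⁻¹ := neg_abs_le _
      have h2N : 0 < 2 * N * (x ^ 2)⁻¹ := by positivity
      linarith
    obtain ⟨a, haa7, ha⟩ := hreach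
    refine ⟨a, haa7, ?_⟩
    have haR : R ≤ a := le_trans ha7R haa7
    apply persist_nonneg (h := fun r => φ r - r / N + r⁻¹ + 2 * N * (r ^ 2)⁻¹)
      (h' := fun x => D x - 1 / N + -1 / x ^ 2 + 2 * N * (-2 / x ^ 3))
      (fun x hx => by
        have hx0 : 0 < x := hpos a haR x hx
        exact (hdw a haR x hx).add
          (((hderiv_invsq x hx0).hasDerivWithinAt).const_mul (2 * N))) ha
    intro x hx hzero
    have hx0 : 0 < x := hpos a haR x hx
    have hxa7 : a7 ≤ x := le_trans haa7 hx
    obtain ⟨F1, hG⟩ := hlowfacts x hxa7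
    try simp only at hzero
    have hφx : φ x = x / N - x⁻¹ - 2 * N * (x ^ 2)⁻¹ := by linarith
    have hBe : (x - N * φ x) * x ^ 2 = N * x + 2 * N ^ 2 := by
      rw [hφx]; field_simp; ring
    have hDgt : 1 / N + 1 / x ^ 2 + 4 * N / x ^ 3 < D x := by
      rw [hDform x hx0]
      exact DgtL hN0 hN1 hK1 hx0 F1 hG (le_of_eq hBe.symm) (le_trans hba7 hxa7)
    show 0 < D x - 1 / N + -1 / x ^ 2 + 2 * N * (-2 / x ^ 3)
    have e9 : 2 * N * (-2 / x ^ 3) = -(4 * N / x ^ 3) := by ring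
    rw [e9]
    linarith [(by ring : (-1:ℝ)/x^2 = -(1/x^2))]
  -- conclusion
  have ha8R : R ≤ a8 := le_trans ha7R ha8a7
  refine ⟨(n:ℝ) + 2 * N, by linarith, a8, ha8R, ?_⟩
  intro r hr
  have hr0 : 0 < r := hpos a8 ha8R r hr
  have h1 := hU r (le_trans (le_trans ha6a7 ha8a7) hr)
  have h2 := hL r hr
  have e1 : (1:ℝ) / r = r⁻¹ := one_div r
  have e2 : ((n:ℝ) + 2 * N) / r ^ 2 = (n:ℝ) * (r ^ 2)⁻¹ + 2 * N * (r ^ 2)⁻¹ := by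
    field_simp
    try ring
  have hn2inv : 0 ≤ (n:ℝ) * (r ^ 2)⁻¹ := by positivity
  have h2Ninv : 0 ≤ 2 * N * (r ^ 2)⁻¹ := by positivity
  rw [abs_le]
  constructor
  · rw [e1, e2]; linarith
  · rw [e1, e2]; linarith
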